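/- arXiv:2002.08149 — 10 statements merged into one kernel-verified Lean document; each statement's English description precedes it below -/
import Mathlib

section
/- Let q = 2^m and let f : F_{2^n} → F_{2^n} with n even be defined by f(x) = c·x^{2^m+1} where n = 2m, c ∈ F_{2^m}^*, and Tr_{F_{2^m}/F_2}(c) = 0. Then for every a ∈ F_{2^n}^*, the map x ↦ f(x+a) + f(x) + a·x is a bijection of F_{2^n}. (I.e., f is a planar function in the Zhou sense.) -/
/-- Zhou-planarity of f(x) = c·x^{2^m+1} over F_{2^{2m}} when c ∈ F_{2^m}^*
with absolute trace zero. -/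
theorem stmt_0 (m : ℕ) (hm : 0 < m) (F : Type*) [Field F] [Fintype F]
    (hcard : Fintype.card F = 2 ^ (2 * m)) (c : F) (hc0 : c ≠ 0)
    (hcsub : c ^ (2 ^ m) = c)
    (htr : ∑ i ∈ Finset.range m, c ^ (2 ^ i) = 0) :
    ∀ a : F, a ≠ 0 →
      Function.Bijective
        (fun x : F => c * (x + a) ^ (2 ^ m + 1) + c * x ^ (2 ^ m + 1) + a * x) := by
  -- characteristic 2
  have h2 : (2 : F) = 0 := by
    have h := FiniteField.cast_card_eq_zero F
    rw [hcard] at h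
    push_cast at h
    exact pow_eq_zero_iff (by positivity : 2 * m ≠ 0) |>.mp h
  haveI : CharP F 2 := CharTwo.of_one_ne_zero_of_two_eq_zero one_ne_zero h2
  haveI : Fact (Nat.Prime 2) := ⟨Nat.prime_two⟩
  set q : ℕ := 2 ^ m with hq
  have hqne : q ≠ 0 := by positivity
  have hqq : ∀ w : F, (w ^ q) ^ q = w := by
    intro w
    have hqm : q * q = 2 ^ (2 * m) := by rw [hq, ← pow_add, two_mul]
    rw [← pow_mul, hqm, ← hcard]
    exact FiniteField.pow_card w
  have hfrob : ∀ u v : F, (u + v) ^ q = u ^ q + v ^ q := by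
    intro u v; rw [hq, add_pow_char_pow]
  intro a ha
  rw [← Finite.injective_iff_bijective]
  intro x y hxy
  simp only at hxy
  set z : F := x + y with hzdef
  have hz : c * a * z ^ q + (c * a ^ q + a) * z = 0 := by
    have hx : (x + a) ^ q = x ^ q + a ^ q := hfrob x a
    have hy : (y + a) ^ q = y ^ q + a ^ q := hfrob y a
    have hzq : z ^ q = x ^ q + y ^ q := hfrob x y
    have e : (c * (x + a) ^ (q + 1) + c * x ^ (q + 1) + a * x)
        + (c * (y + a) ^ (q + 1) + c * y ^ (q + 1) + a * y)
        = c * a * z ^ q + (c * a ^ q + a) * z := by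
      simp only [pow_succ]
      rw [hx, hy, hzq, hzdef]
      linear_combination (c * x ^ q * x + c * y ^ q * y + c * a ^ q * a) * h2
    rw [← e, hxy]
    linear_combination (c * (y + a) ^ (q + 1) + c * y ^ (q + 1) + a * y) * h2
  have hz0 : z = 0 := by
    by_contra hne
    have hzq0 : z ^ q ≠ 0 := pow_ne_zero _ hne
    -- conjugate relation
    have hz' : c * a ^ q * z + (c * a + a ^ q) * z ^ q = 0 := by
      have h1 : (c * a * z ^ q) ^ q + ((c * a ^ q + a) * z) ^ q = 0 := by
        rw [← hfrob, hz]
        exact zero_pow hqne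
      have e1 : (c * a * z ^ q) ^ q = c * a ^ q * z := by
        rw [mul_pow, mul_pow, hcsub, hqq]
      have e2 : ((c * a ^ q + a) * z) ^ q = (c * a + a ^ q) * z ^ q := by
        rw [mul_pow, hfrob, mul_pow, hcsub, hqq]
      rw [e1, e2] at h1
      exact h1
    have h1 : c * a * z ^ q = (c * a ^ q + a) * z := by
      linear_combination hz - ((c * a ^ q + a) * z) * h2
    have h2' : c * a ^ q * z = (c * a + a ^ q) * z ^ q := by
      linear_combination hz' - ((c * a + a ^ q) * z ^ q) * h2
    have hprod : (c * a * (c * a ^ q)) * (z * z ^ q)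
        = ((c * a ^ q + a) * (c * a + a ^ q)) * (z * z ^ q) := by
      linear_combination (c * a ^ q * z) * h1 + ((c * a ^ q + a) * z) * h2'
    have hcancel : c * a * (c * a ^ q) = (c * a ^ q + a) * (c * a + a ^ q) :=
      mul_right_cancel₀ (mul_ne_zero hne hzq0) hprod
    have hstar : c * (a ^ q) ^ 2 + c * a ^ 2 + a ^ q * a = 0 := by
      linear_combination -hcancel
    set t : F := a ^ q / a with htdef
    have haq : a ^ q ≠ 0 := pow_ne_zero _ ha
    have hat : a ^ q = t * a := by rw [htdef, div_mul_cancel₀ _ ha]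
    have hquad : c * t ^ 2 + c + t = 0 := by
      have h : (c * t ^ 2 + c + t) * a ^ 2 = 0 * a ^ 2 := by
        rw [hat] at hstar
        linear_combination hstar
      exact mul_right_cancel₀ (pow_ne_zero 2 ha) h
    set u : F := c * t with hudef
    have hu : u ^ 2 = u + c ^ 2 := by
      rw [hudef]
      linear_combination c * hquad - (c * t + c ^ 2) * h2
    have hind : ∀ i : ℕ, u ^ 2 ^ i = u + ∑ j ∈ Finset.range i, c ^ 2 ^ (j + 1) := by
      intro i
      induction i with
      | zero => simp
      | succ i ih =>
        have hs : (∑ j ∈ Finset.range i, c ^ 2 ^ (j + 1)) ^ 2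
            = ∑ j ∈ Finset.range i, c ^ 2 ^ (j + 2) := by
          rw [sum_pow_char]
          refine Finset.sum_congr rfl fun j _ => ?_
          rw [← pow_mul, ← pow_succ]
        have hs2 : ∑ j ∈ Finset.range (i + 1), c ^ 2 ^ (j + 1)
            = (∑ j ∈ Finset.range i, c ^ 2 ^ (j + 2)) + c ^ 2 ^ 1 :=
          Finset.sum_range_succ' _ i
        calc u ^ 2 ^ (i + 1) = (u ^ 2 ^ i) ^ 2 := by rw [← pow_mul, pow_succ]
          _ = (u + ∑ j ∈ Finset.range i, c ^ 2 ^ (j + 1)) ^ 2 := by rw [ih]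
          _ = u ^ 2 + (∑ j ∈ Finset.range i, c ^ 2 ^ (j + 1)) ^ 2 := by
              rw [add_pow_char]
          _ = u + ∑ j ∈ Finset.range (i + 1), c ^ 2 ^ (j + 1) := by
              rw [hu, hs, hs2]; norm_num; ring
    have hSm : ∑ j ∈ Finset.range m, c ^ 2 ^ (j + 1) = 0 := by
      have h : (∑ i ∈ Finset.range m, c ^ 2 ^ i) ^ 2
          = ∑ j ∈ Finset.range m, c ^ 2 ^ (j + 1) := by
        rw [sum_pow_char]
        refine Finset.sum_congr rfl fun j _ => ?_
        rw [← pow_mul, ← pow_succ]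
      rw [← h, htr]
      ring
    have huq : u ^ q = u := by
      rw [hq, hind m, hSm, add_zero]
    have htq : t ^ q = t := by
      have h := huq
      rw [hudef] at h
      rw [mul_pow, hcsub] at h
      exact mul_left_cancel₀ hc0 h
    have ht1 : t ^ q * t = 1 := by
      rw [htdef, div_pow, hqq, div_mul_div_comm, mul_comm]
      exact div_self (mul_ne_zero haq ha)
    have ht2 : t ^ 2 = 1 := by rw [← ht1, htq, pow_two]
    have htone : t = 1 := by
      have hsq : (t - 1) ^ 2 = 0 := by linear_combination ht2 + (1 - t) * h2
      exact sub_eq_zero.mp (pow_eq_zero_iff (by norm_num : 2 ≠ 0) |>.mp hsq)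
    rw [htone] at hquad
    have : (1 : F) = 0 := by linear_combination hquad - c * h2
    exact one_ne_zero this
  have hxy0 : x + y = 0 := by rw [← hzdef]; exact hz0
  linear_combination hxy0 - y * h2
end

section
/- Let q = 2^m. For s ∈ F_{q^2} with s^{q+1} ≠ 1, let a = s^q/(1 + s^{q+1}). Then Tr_{F_q/F_2}(a^{q+1}) = 0. -/
/-- If s ∈ F_{q^2} with s^{q+1} ≠ 1 and a = s^q/(1+s^{q+1}),
then Tr_{F_q/F_2}(a^{q+1}) = 0. -/
theorem stmt_2 (m : ℕ) (hm : 0 < m) (F : Type*) [Field F] [Fintype F]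
    (hcard : Fintype.card F = 2 ^ (2 * m)) (s : F)
    (hs : s ^ (2 ^ m + 1) ≠ 1) (a : F)
    (ha : a = s ^ (2 ^ m) / (1 + s ^ (2 ^ m + 1))) :
    ∑ i ∈ Finset.range m, (a ^ (2 ^ m + 1)) ^ (2 ^ i) = 0 := by
  have hc : (Fintype.card F : F) = 0 := FiniteField.cast_card_eq_zero F
  rw [hcard] at hc
  push_cast at hc
  have h2 : (2 : F) = 0 := pow_eq_zero_iff (n := 2 * m) (by omega) |>.mp hc
  haveI hchar : CharP F 2 := by
    have hdvd : ringChar F ∣ 2 := ringChar.dvd (by exact_mod_cast h2)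
    have hp : (ringChar F).Prime := CharP.char_is_prime F (ringChar F)
    have : ringChar F = 2 := (Nat.prime_dvd_prime_iff_eq hp Nat.prime_two).mp hdvd
    exact this ▸ ringChar.charP F
  haveI : Fact (Nat.Prime 2) := ⟨Nat.prime_two⟩
  set q := 2 ^ m with hq
  set N := s ^ (q + 1) with hNdef
  have h1N : (1 : F) + N ≠ 0 := by
    intro h
    apply hs
    have hN1 : N = -1 := eq_neg_of_add_eq_zero_right (by linear_combination h)
    rw [hN1, CharTwo.neg_eq]
  have hsq : s ^ (q * q) = s := by
    have h := FiniteField.pow_card s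
    rw [hcard] at h
    have he : (2 : ℕ) ^ (2 * m) = q * q := by rw [hq, ← pow_add, two_mul]
    rwa [he] at h
  have hNq : N ^ q = N := by
    rw [hNdef, ← pow_mul, show (q + 1) * q = q * q + q by ring, pow_add, hsq,
      ← pow_succ']
  have h1Nq : (1 + N) ^ q = 1 + N := by
    rw [hq, add_pow_char_pow, one_pow, ← hq, hNq]
  set x := N / (1 + N) with hx
  have hxq : x ^ q = x := by
    rw [hx, div_pow, h1Nq, hNq]
  have haq : a ^ q = s / (1 + N) := by
    rw [ha, div_pow, ← pow_mul, hsq, h1Nq]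
  have hssq : s * s ^ q = N := by rw [hNdef, pow_succ]; ring
  have hA : a ^ (q + 1) = N / (1 + N) ^ 2 := by
    rw [pow_succ, haq, ha, div_mul_div_comm, hssq, ← pow_two]
  have hB : x + x ^ 2 = N / (1 + N) ^ 2 := by
    rw [hx]
    field_simp
    ring_nf
    linear_combination (s ^ 2 * s ^ (2 ^ m * 2)) * h2
  have haq1 : a ^ (q + 1) = x + x ^ 2 := hA.trans hB.symm
  rw [haq1]
  have key : ∀ i ∈ Finset.range m, (x + x ^ 2) ^ 2 ^ i
      = x ^ 2 ^ (i + 1) - x ^ 2 ^ i := by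
    intro i _
    rw [add_pow_char_pow, ← pow_mul, CharTwo.sub_eq_add, pow_succ']
    ring
  rw [Finset.sum_congr rfl key, Finset.sum_range_sub (fun i => x ^ 2 ^ i) m,
    pow_zero, pow_one, ← hq, hxq, sub_self]
end

section
/- Let q = 2^m. Define M = {c ∈ F_{q^2} : Tr_{F_q/F_2}(c^{q+1}) = 0} and N = {a ∈ F_{q^2} : ∃ s ∈ F_{q^2}, s^{q+1} ≠ 1 and a = s^q/(1 + s^{q+1})}. Then M = N. -/
open Finset Polynomial

lemma char_two_of_card {F : Type*} [Field F] [Fintype F] {n : ℕ} (hn : 0 < n)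
    (hcard : Fintype.card F = 2 ^ n) : CharP F 2 := by
  have h := ringChar.charP F
  obtain ⟨k, hp, hk⟩ := FiniteField.card F (ringChar F)
  have h2 : ringChar F = 2 := by
    have hdvd : ringChar F ∣ 2 ^ n := by
      rw [← hcard, hk]; exact dvd_pow_self _ k.pos.ne'
    exact (Nat.prime_dvd_prime_iff_eq hp Nat.prime_two).mp (hp.dvd_of_dvd_pow hdvd)
  rwa [h2] at h

lemma telescope {F : Type*} [Field F] [CharP F 2] (u : F) (k : ℕ) :
    ∑ i ∈ Finset.range k, (u ^ 2 + u) ^ 2 ^ i = u ^ 2 ^ k + u := by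
  have h : ∀ i, (u ^ 2 + u) ^ 2 ^ i = u ^ 2 ^ (i + 1) - u ^ 2 ^ i := by
    intro i
    rw [CharTwo.sub_eq_add, show (2:ℕ) ^ (i+1) = 2 * 2 ^ i from by ring, pow_mul,
      add_pow_char_pow]
  simp_rw [h]
  rw [Finset.sum_range_sub (fun i => u ^ 2 ^ i), pow_zero, pow_one, CharTwo.sub_eq_add]

lemma AS_surj {F : Type*} [Field F] [Fintype F] [CharP F 2] {n : ℕ} (hn : 0 < n)
    (hcard : Fintype.card F = 2 ^ n) (w : F)
    (hw : ∑ i ∈ Finset.range n, w ^ 2 ^ i = 0) : ∃ u : F, u ^ 2 + u = w := by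
  classical
  have h2 : (2 : F) = 0 := by exact_mod_cast CharP.cast_eq_zero F 2
  set f : F → F := fun u => u ^ 2 + u with hf
  set A : Finset F := Finset.univ.image f with hA
  set T : Finset F := Finset.univ.filter (fun x : F => ∑ i ∈ Finset.range n, x ^ 2 ^ i = 0)
    with hT
  have hAT : A ⊆ T := by
    intro b hb
    obtain ⟨u, -, rfl⟩ := Finset.mem_image.mp hb
    simp only [hT, Finset.mem_filter, Finset.mem_univ, true_and, hf]
    rw [telescope, ← hcard, FiniteField.pow_card, CharTwo.add_self_eq_zero]
  have hTcard : T.card ≤ 2 ^ (n - 1) := by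
    set p : Polynomial F := ∑ i ∈ Finset.range n, Polynomial.X ^ 2 ^ i with hp
    have hcoeff : p.coeff (2 ^ (n - 1)) = 1 := by
      rw [hp, Polynomial.finset_sum_coeff]
      rw [Finset.sum_eq_single (n - 1)]
      · simp [Polynomial.coeff_X_pow]
      · intro i hi hne
        rw [Polynomial.coeff_X_pow, if_neg]
        exact fun hc => hne (Nat.pow_right_injective (le_refl 2) hc.symm)
      · intro h; exact absurd (Finset.mem_range.mpr (by omega)) h
    have hpne : p ≠ 0 := fun h => by rw [h] at hcoeff; simp at hcoeff
    have hdeg : p.natDegree ≤ 2 ^ (n - 1) := by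
      refine le_trans (Polynomial.natDegree_sum_le _ _) ?_
      rw [Finset.fold_max_le]
      refine ⟨Nat.zero_le _, fun i hi => ?_⟩
      simp only [Function.comp_apply, Polynomial.natDegree_X_pow]
      exact Nat.pow_le_pow_right (by norm_num) (by have := Finset.mem_range.mp hi; omega)
    have hsub : T ⊆ p.roots.toFinset := by
      intro x hx
      simp only [hT, Finset.mem_filter, Finset.mem_univ, true_and] at hx
      rw [Multiset.mem_toFinset, Polynomial.mem_roots hpne]
      simpa [hp, Polynomial.IsRoot, Polynomial.eval_finset_sum] using hx
    calc T.card ≤ p.roots.toFinset.card := Finset.card_le_card hsub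
      _ ≤ Multiset.card p.roots := Multiset.toFinset_card_le _
      _ ≤ p.natDegree := p.card_roots'
      _ ≤ 2 ^ (n - 1) := hdeg
  have hAcard : Fintype.card F ≤ 2 * A.card := by
    have key := Finset.card_le_mul_card_image (f := f) Finset.univ 2 ?_
    · simpa [← hA] using key
    · intro b hb
      obtain ⟨a, -, rfl⟩ := Finset.mem_image.mp hb
      have hsub2 : (Finset.univ.filter fun x => f x = f a) ⊆ {a, a + 1} := by
        intro x hx
        simp only [Finset.mem_filter, Finset.mem_univ, true_and, hf] at hx
        have h1 : (x + a) * (x + a - 1) = 0 := by linear_combination hx + (a*x + a^2 - x) * h2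
        simp only [Finset.mem_insert, Finset.mem_singleton]
        rcases mul_eq_zero.mp h1 with h | h
        · left; linear_combination h - a * h2
        · right; linear_combination h - a * h2
      calc (Finset.univ.filter fun x => f x = f a).card ≤ ({a, a+1} : Finset F).card :=
            Finset.card_le_card hsub2
        _ ≤ 2 := Finset.card_insert_le _ _ |>.trans (by simp)
  have hTA : T.card ≤ A.card := by
    have h1 : 2 * 2 ^ (n - 1) ≤ 2 * A.card := by
      calc 2 * 2 ^ (n - 1) = 2 ^ n := by rw [← pow_succ']; congr 1; omega
        _ = Fintype.card F := hcard.symm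
        _ ≤ 2 * A.card := hAcard
    have := Nat.le_of_mul_le_mul_left h1 (by norm_num)
    omega
  have hEq : A = T := Finset.eq_of_subset_of_card_le hAT hTA
  have hwT : w ∈ T := by simp [hT, hw]
  rw [← hEq] at hwT
  obtain ⟨u, -, hu⟩ := Finset.mem_image.mp hwT
  exact ⟨u, hu⟩

lemma norm_surj {F : Type*} [Field F] [Fintype F] {m : ℕ} (hm : 0 < m)
    (hcard : Fintype.card F = 2 ^ (2 * m)) (t : F) (ht : t ^ 2 ^ m = t) :
    ∃ s : F, s ^ (2 ^ m + 1) = t := by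
  classical
  have hq2 : 2 ≤ 2 ^ m := by
    calc 2 = 2 ^ 1 := (pow_one 2).symm
    _ ≤ 2 ^ m := Nat.pow_le_pow_right (by norm_num) hm
  have hpow : ∀ x : F, x ^ (2 ^ m * 2 ^ m) = x := by
    intro x
    rw [show 2 ^ m * 2 ^ m = Fintype.card F from by rw [hcard, ← pow_add, two_mul],
      FiniteField.pow_card]
  set g : F → F := fun s => s ^ (2 ^ m + 1) with hg
  set B : Finset F := Finset.univ.image g with hB
  set K : Finset F := Finset.univ.filter (fun x : F => x ^ 2 ^ m = x) with hK
  have hBK : B ⊆ K := by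
    intro b hb
    obtain ⟨s, -, rfl⟩ := Finset.mem_image.mp hb
    simp only [hK, Finset.mem_filter, Finset.mem_univ, true_and, hg]
    rw [← pow_mul, show (2 ^ m + 1) * 2 ^ m = 2 ^ m * 2 ^ m + 2 ^ m from by ring,
      pow_add, hpow, ← pow_succ']
  have hKcard : K.card ≤ 2 ^ m := by
    set p : Polynomial F := Polynomial.X ^ 2 ^ m - Polynomial.X with hp
    have hcoeff : p.coeff (2 ^ m) = 1 := by
      rw [hp, Polynomial.coeff_sub, Polynomial.coeff_X_pow, if_pos rfl, Polynomial.coeff_X,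
        if_neg (by omega), sub_zero]
    have hpne : p ≠ 0 := fun h => by rw [h] at hcoeff; simp at hcoeff
    have hdeg : p.natDegree ≤ 2 ^ m := by
      refine le_trans (Polynomial.natDegree_sub_le _ _) ?_
      simp only [Polynomial.natDegree_X_pow, Polynomial.natDegree_X]
      omega
    have hsub : K ⊆ p.roots.toFinset := by
      intro x hx
      simp only [hK, Finset.mem_filter, Finset.mem_univ, true_and] at hx
      rw [Multiset.mem_toFinset, Polynomial.mem_roots hpne]
      simp [hp, Polynomial.IsRoot, hx, sub_eq_zero]
    calc K.card ≤ p.roots.toFinset.card := Finset.card_le_card hsub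
      _ ≤ Multiset.card p.roots := Multiset.toFinset_card_le _
      _ ≤ p.natDegree := p.card_roots'
      _ ≤ 2 ^ m := hdeg
  have hcard_le : Fintype.card F ≤ (2 ^ m + 1) * B.card := by
    have key := Finset.card_le_mul_card_image (f := g) Finset.univ (2 ^ m + 1) ?_
    · simpa [← hB] using key
    · intro b hb
      set pb : Polynomial F := Polynomial.X ^ (2 ^ m + 1) - Polynomial.C b with hpb
      have hpbne : pb ≠ 0 := Polynomial.X_pow_sub_C_ne_zero (by omega) b
      have hsubb : (Finset.univ.filter fun x => g x = b) ⊆ pb.roots.toFinset := by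
        intro x hx
        simp only [Finset.mem_filter, Finset.mem_univ, true_and, hg] at hx
        rw [Multiset.mem_toFinset, Polynomial.mem_roots hpbne]
        simp [hpb, Polynomial.IsRoot, hx, sub_eq_zero]
      calc (Finset.univ.filter fun x => g x = b).card ≤ pb.roots.toFinset.card :=
            Finset.card_le_card hsubb
        _ ≤ Multiset.card pb.roots := Multiset.toFinset_card_le _
        _ ≤ pb.natDegree := pb.card_roots'
        _ = 2 ^ m + 1 := Polynomial.natDegree_X_pow_sub_C
  have hqB : 2 ^ m ≤ B.card := by
    by_contra hcon
    push_neg at hcon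
    have hb : B.card + 1 ≤ 2 ^ m := hcon
    have h2' : 2 ^ m * (B.card + 1) ≤ 2 ^ m * 2 ^ m := Nat.mul_le_mul_left _ hb
    have h1' : 2 ^ m * 2 ^ m ≤ (2 ^ m + 1) * B.card := by
      calc 2 ^ m * 2 ^ m = Fintype.card F := by rw [hcard, ← pow_add, two_mul]
        _ ≤ (2 ^ m + 1) * B.card := hcard_le
    nlinarith
  have hEq : B = K := Finset.eq_of_subset_of_card_le hBK (le_trans hKcard hqB)
  have htK : t ∈ K := by simp [hK, ht]
  rw [← hEq] at htK
  obtain ⟨s, -, hs⟩ := Finset.mem_image.mp htK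
  exact ⟨s, hs⟩

/-- M = N where M is the trace-zero-norm set and N is the image of
s ↦ s^q/(1+s^{q+1}). -/
theorem stmt_3 (m : ℕ) (hm : 0 < m) (F : Type*) [Field F] [Fintype F]
    (hcard : Fintype.card F = 2 ^ (2 * m)) :
    {c : F | ∑ i ∈ Finset.range m, (c ^ (2 ^ m + 1)) ^ (2 ^ i) = 0} =
      {a : F | ∃ s : F, s ^ (2 ^ m + 1) ≠ 1 ∧
        a = s ^ (2 ^ m) / (1 + s ^ (2 ^ m + 1))} := by
  haveI hchar : CharP F 2 := char_two_of_card (by omega) hcard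
  have h2 : (2 : F) = 0 := by exact_mod_cast CharP.cast_eq_zero F 2
  have hpow2 : ∀ x : F, x ^ (2 ^ m * 2 ^ m) = x := by
    intro x
    rw [show 2 ^ m * 2 ^ m = Fintype.card F from by rw [hcard, ← pow_add, two_mul],
      FiniteField.pow_card]
  ext c
  simp only [Set.mem_setOf_eq]
  constructor
  · intro hc
    by_cases hc0 : c = 0
    · refine ⟨0, ?_, ?_⟩
      · rw [zero_pow (by positivity)]; exact zero_ne_one
      · rw [hc0, zero_pow (show 2 ^ m + 1 ≠ 0 by positivity),
          zero_pow (show 2 ^ m ≠ 0 by positivity), add_zero, zero_div]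
    · set w := c ^ (2 ^ m + 1) with hw
      have hw0 : w ≠ 0 := pow_ne_zero _ hc0
      have hwq : w ^ 2 ^ m = w := by
        rw [hw, ← pow_mul, show (2 ^ m + 1) * 2 ^ m = 2 ^ m * 2 ^ m + 2 ^ m from by ring,
          pow_add, hpow2, ← pow_succ']
      have hfull : ∑ i ∈ Finset.range (2 * m), w ^ 2 ^ i = 0 := by
        rw [two_mul, Finset.sum_range_add]
        have hterm : ∀ i, w ^ 2 ^ (m + i) = w ^ 2 ^ i := by
          intro i
          rw [pow_add, pow_mul, hwq]
        simp_rw [hterm]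
        rw [hc, add_zero]
      obtain ⟨u, hu⟩ := AS_surj (by omega) hcard w hfull
      have htel := telescope u m
      rw [hu] at htel
      have huq : u ^ 2 ^ m = u := by
        have h0 : u ^ 2 ^ m + u = 0 := by rw [← htel]; exact hc
        linear_combination h0 - u * h2
      have hune0 : u ≠ 0 := fun h => hw0 (by rw [← hu, h]; ring)
      have hune1 : u ≠ 1 := fun h => hw0 (by rw [← hu, h]; linear_combination h2)
      set t := (1 + u) / u with ht
      have htq : t ^ 2 ^ m = t := by
        rw [ht, div_pow, add_pow_char_pow, one_pow, huq]
      have ht1 : t ≠ 1 := by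
        intro hcon
        rw [ht, div_eq_one_iff_eq hune0] at hcon
        exact one_ne_zero (α := F) (by linear_combination hcon)
      have ht0 : t ≠ 0 := by
        rw [ht]
        intro hcon
        rcases div_eq_zero_iff.mp hcon with h | h
        · exact hune1 (by linear_combination h - h2)
        · exact hune0 h
      obtain ⟨s0, hs0⟩ := norm_surj hm hcard t htq
      have h1t : (1 + t) ≠ 0 := fun hcon => ht1 (by linear_combination hcon - h2)
      have hs00 : s0 ≠ 0 := fun h => ht0 (by rw [← hs0, h, zero_pow (by positivity)])
      set a0 := s0 ^ 2 ^ m / (1 + t) with ha0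
      have ha00 : a0 ≠ 0 := div_ne_zero (pow_ne_zero _ hs00) h1t
      have h1tq : (1 + t) ^ 2 ^ m = 1 + t := by rw [add_pow_char_pow, one_pow, htq]
      have h1tu : 1 + t = 1 / u := by
        rw [ht]
        field_simp
        linear_combination u * h2
      have ha0n : a0 ^ (2 ^ m + 1) = w := by
        rw [ha0, div_pow]
        have hnum : (s0 ^ 2 ^ m) ^ (2 ^ m + 1) = t := by
          rw [← pow_mul, show 2 ^ m * (2 ^ m + 1) = (2 ^ m + 1) * 2 ^ m from by ring,
            pow_mul, hs0, htq]
        have hden : (1 + t) ^ (2 ^ m + 1) = (1 + t) ^ 2 := by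
          rw [pow_succ, h1tq, sq]
        rw [hnum, hden, h1tu, ← hu, ht]
        field_simp
        ring
      set z := c / a0 with hz
      have hzn : z ^ (2 ^ m + 1) = 1 := by
        rw [hz, div_pow, ha0n, ← hw, div_self hw0]
      have hst : (z ^ 2 ^ m * s0) ^ (2 ^ m + 1) = t := by
        rw [mul_pow, hs0, ← pow_mul, show 2 ^ m * (2 ^ m + 1) = (2 ^ m + 1) * 2 ^ m from by
          ring, pow_mul, hzn, one_pow, one_mul]
      refine ⟨z ^ 2 ^ m * s0, ?_, ?_⟩
      · rw [hst]; exact ht1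
      · rw [hst, mul_pow, ← pow_mul, hpow2, hz, ha0]
        field_simp
  · rintro ⟨s, hs1, rfl⟩
    set t := s ^ (2 ^ m + 1) with ht'
    clear_value t
    have htq : t ^ 2 ^ m = t := by
      rw [ht', ← pow_mul, show (2 ^ m + 1) * 2 ^ m = 2 ^ m * 2 ^ m + 2 ^ m from by ring,
        pow_add, hpow2, ← pow_succ']
    have h1t : (1 + t) ≠ 0 := fun hcon => hs1 (by linear_combination hcon - h2)
    set u := t / (1 + t) with hu'
    have h1tq : (1 + t) ^ 2 ^ m = 1 + t := by rw [add_pow_char_pow, one_pow, htq]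
    have huq : u ^ 2 ^ m = u := by rw [hu', div_pow, htq, h1tq]
    have hwu : (s ^ 2 ^ m / (1 + t)) ^ (2 ^ m + 1) = u ^ 2 + u := by
      rw [div_pow]
      have hnum : (s ^ 2 ^ m) ^ (2 ^ m + 1) = t := by
        rw [← pow_mul, show 2 ^ m * (2 ^ m + 1) = (2 ^ m + 1) * 2 ^ m from by ring,
          pow_mul, ← ht', htq]
      have hden : (1 + t) ^ (2 ^ m + 1) = (1 + t) ^ 2 := by
        rw [pow_succ, h1tq, sq]
      rw [hnum, hden, hu']
      field_simp
      linear_combination (-t ^ 2) * h2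
    rw [hwu, telescope, huq, CharTwo.add_self_eq_zero]
end

section
/- Let q = 2^m and let μ_{q+1} = {δ ∈ F_{q^2} : δ^{q+1} = 1}. Then the map φ : F_{q^2}^* \ μ_{q+1} → F_{q^2}, φ(s) = s^q/(1 + s^{q+1}), is 2-to-1; more precisely, for s, t in the domain, φ(s) = φ(t) if and only if t = s or t = 1/s^q, and these two values are always distinct. -/
/-- φ(s) = s^q/(1+s^{q+1}) is 2-to-1 on F_{q^2}^* \ μ_{q+1}, with fibers {s, 1/s^q}. -/
theorem stmt_5 (m : ℕ) (hm : 0 < m) (F : Type*) [Field F] [Fintype F]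
    (hcard : Fintype.card F = 2 ^ (2 * m)) (s t : F)
    (hs0 : s ≠ 0) (hs1 : s ^ (2 ^ m + 1) ≠ 1)
    (ht0 : t ≠ 0) (ht1 : t ^ (2 ^ m + 1) ≠ 1) :
    (s ^ (2 ^ m) / (1 + s ^ (2 ^ m + 1)) = t ^ (2 ^ m) / (1 + t ^ (2 ^ m + 1)) ↔
      t = s ∨ t = (s ^ (2 ^ m))⁻¹) ∧ s ≠ (s ^ (2 ^ m))⁻¹ := by
  obtain ⟨p, hp⟩ := CharP.exists F
  haveI := hp
  have hpp : p.Prime := CharP.char_is_prime F p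
  obtain ⟨n, hn⟩ := FiniteField.card F p
  have hp2 : p = 2 := by
    have hdvd : p ∣ 2 ^ (2 * m) := by
      rw [← hcard, hn.2]
      exact dvd_pow_self p n.pos.ne'
    exact (Nat.prime_dvd_prime_iff_eq hpp Nat.prime_two).mp (hpp.dvd_of_dvd_pow hdvd)
  subst hp2
  haveI : CharP F 2 := hp
  haveI : Fact (Nat.Prime 2) := ⟨Nat.prime_two⟩
  set q := 2 ^ m with hq
  have h2 : (2 : F) = 0 := CharTwo.two_eq_zero
  have hqq : ∀ a : F, (a ^ q) ^ q = a := by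
    intro a
    rw [← pow_mul, hq, ← pow_add, ← two_mul, ← hcard, FiniteField.pow_card]
  have hfrob : ∀ a b : F, (a + b) ^ q = a ^ q + b ^ q := fun a b =>
    add_pow_char_pow a b 2 m
  have hd : ∀ a : F, a ^ (q + 1) ≠ 1 → (1 : F) + a ^ (q + 1) ≠ 0 := by
    intro a ha h0
    apply ha
    have h3 : -(1 : F) = a ^ (q + 1) := neg_eq_of_add_eq_zero_right h0
    rw [← h3, CharTwo.neg_eq]
  have hdA : (1 : F) + s ^ (q + 1) ≠ 0 := hd s hs1
  have hdB : (1 : F) + t ^ (q + 1) ≠ 0 := hd t ht1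
  constructor
  · rw [div_eq_div_iff hdA hdB]
    constructor
    · intro h
      by_cases hst : t = s
      · exact Or.inl hst
      right
      have hsum : s + t ≠ 0 := by
        intro h0
        have h3 : -s = t := neg_eq_of_add_eq_zero_right h0
        exact hst (by rw [← h3, CharTwo.neg_eq])
      have key : (s + t) ^ q = s ^ q * t ^ q * (s + t) := by
        rw [hfrob]
        linear_combination h + (t ^ q - s ^ q * t ^ q * t) * h2
      have key2 : s + t = s * t * (s ^ q * t ^ q) * (s + t) := by
        calc s + t = ((s + t) ^ q) ^ q := (hqq _).symm
          _ = (s ^ q * t ^ q * (s + t)) ^ q := by rw [key]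
          _ = (s ^ q) ^ q * (t ^ q) ^ q * (s + t) ^ q := by rw [mul_pow, mul_pow]
          _ = s * t * (s ^ q * t ^ q * (s + t)) := by rw [hqq, hqq, key]
          _ = s * t * (s ^ q * t ^ q) * (s + t) := by ring
      have h1 : s * t * (s ^ q * t ^ q) = 1 := by
        apply mul_right_cancel₀ hsum
        rw [one_mul]
        exact key2.symm
      have e1 : s ^ (q + 1) * t ^ (q + 1) = 1 := by
        rw [pow_succ, pow_succ]
        linear_combination h1
      have e2 : s * t ^ q * (1 + s ^ (q + 1)) = 1 * (1 + s ^ (q + 1)) := by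
        linear_combination (-s) * h + e1
      have st_q : s * t ^ q = 1 := mul_right_cancel₀ hdA e2
      have ht_q : t ^ q = s⁻¹ := (inv_eq_of_mul_eq_one_right st_q).symm
      calc t = (t ^ q) ^ q := (hqq t).symm
        _ = (s⁻¹) ^ q := by rw [ht_q]
        _ = (s ^ q)⁻¹ := by rw [inv_pow]
    · rintro (rfl | rfl)
      · rfl
      have htq : ((s ^ q)⁻¹) ^ q = s⁻¹ := by rw [inv_pow, hqq]
      have hsq0 : s ^ q ≠ 0 := pow_ne_zero q hs0
      rw [pow_succ, pow_succ, htq]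
      field_simp
      ring
  · intro h
    apply hs1
    have h1 : s ^ (q + 1) = s ^ q * (s ^ q)⁻¹ := by rw [← h, ← pow_succ]
    rw [h1, mul_inv_cancel₀ (pow_ne_zero q hs0)]
end

section
/- Let q = 2^m. The set N = {a ∈ F_{q^2} : ∃ s ∈ F_{q^2}, s^{q+1} ≠ 1, a = s^q/(1 + s^{q+1})} has cardinality (q^2 − q)/2. -/
section Aux

variable {F : Type*} [Field F]

private lemma aux_den_ne {q : ℕ} (h2 : (2:F) = 0) {s : F} (hs : s ^ (q+1) ≠ 1) :
    1 + s ^ (q+1) ≠ 0 := by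
  intro h
  apply hs
  linear_combination h - h2

private lemma aux_key {q : ℕ} (hq0 : q ≠ 0) (h2 : (2:F) = 0)
    (hfrob : ∀ x y : F, (x+y)^q = x^q + y^q)
    (hcardpow : ∀ x : F, (x^q)^q = x)
    {s t : F} (hs0 : s ≠ 0) (hs : s^(q+1) ≠ 1) (ht : t^(q+1) ≠ 1)
    (heq : t^q/(1+t^(q+1)) = s^q/(1+s^(q+1))) : t = s ∨ t = (s^q)⁻¹ := by
  have hdS := aux_den_ne h2 hs
  have hdT := aux_den_ne h2 ht
  have ht0 : t ≠ 0 := by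
    intro h
    subst h
    rw [zero_pow hq0, zero_div] at heq
    rcases div_eq_zero_iff.mp heq.symm with h' | h'
    · exact hs0 ((pow_eq_zero_iff hq0).mp h')
    · exact hdS h'
  have E1 : t^q * (1+s^(q+1)) = s^q * (1+t^(q+1)) := (div_eq_div_iff hdT hdS).mp heq
  have hfix : ∀ x : F, (x^(q+1))^q = x^(q+1) := by
    intro x
    calc (x^(q+1))^q = ((x^q) * x)^q := by rw [pow_succ]
      _ = (x^q)^q * x^q := mul_pow _ _ _
      _ = x * x^q := by rw [hcardpow]
      _ = x^(q+1) := by rw [pow_succ]; ring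
  have E2 : t * (1+s^(q+1)) = s * (1+t^(q+1)) := by
    have h' := congrArg (· ^ q) E1
    simp only [mul_pow] at h'
    rw [show (1:F) + s^(q+1) = 1 + s^(q+1) from rfl] at h'
    rw [show ∀ x : F, (1 + x^(q+1))^q = 1 + x^(q+1) from fun x => by
      rw [hfrob, one_pow, hfix]] at h'
    rw [show (1 + t^(q+1):F)^q = 1 + t^(q+1) from by rw [hfrob, one_pow, hfix]] at h'
    rw [hcardpow, hcardpow] at h'
    exact h'
  by_cases hts : t = s
  · exact Or.inl hts
  right
  set A := s^q with hA
  set B := t^q with hB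
  have hst : s + t ≠ 0 := by
    intro h
    exact hts (by linear_combination h - s*h2)
  have hsp : s^(q+1) = A * s := pow_succ s q
  have htp : t^(q+1) = B * t := pow_succ t q
  rw [hsp, htp] at E1 E2
  have step1 : A + B = A*B*(s+t) := by linear_combination E1 + (A - A*B*s) * h2
  have step2 : s + t = s*t*(A+B) := by linear_combination E2 + (s - s*t*A) * h2
  have step3 : A*B*s*t = 1 := by
    have h3 : (s+t) * (A*B*s*t - 1) = 0 := by
      linear_combination (-1 : F)*step2 - s*t*step1
    rcases mul_eq_zero.mp h3 with h' | h'
    · exact absurd h' hst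
    · exact sub_eq_zero.mp h'
  have hdS' : 1 + A*s ≠ 0 := by rw [← hsp]; exact hdS
  have step4 : B * s = 1 := by
    have h4 : (B*s - 1)*(1 + A*s) = 0 := by linear_combination s*E1 + step3
    rcases mul_eq_zero.mp h4 with h' | h'
    · exact sub_eq_zero.mp h'
    · exact absurd h' hdS'
  have hBinv : B = s⁻¹ := by
    field_simp
    exact step4
  calc t = B^q := (hcardpow t).symm
    _ = (s⁻¹)^q := by rw [hBinv]
    _ = A⁻¹ := by rw [inv_pow]

private lemma aux_inv {q : ℕ} (hq0 : q ≠ 0)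
    (hcardpow : ∀ x : F, (x^q)^q = x)
    {s : F} (hs0 : s ≠ 0) (hs : s^(q+1) ≠ 1) :
    ((s^q)⁻¹)^(q+1) ≠ 1 ∧
      ((s^q)⁻¹)^q / (1 + ((s^q)⁻¹)^(q+1)) = s^q/(1+s^(q+1)) ∧ (s^q)⁻¹ ≠ s := by
  have hsq0 : s^q ≠ 0 := pow_ne_zero _ hs0
  have hsq10 : s^(q+1) ≠ 0 := pow_ne_zero _ hs0
  have hval : ((s^q)⁻¹)^(q+1) = (s^(q+1))⁻¹ := by
    rw [inv_pow, pow_succ, hcardpow, ← inv_inj]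
    simp only [inv_inv]
    rw [pow_succ]
    ring
  have hnum : ((s^q)⁻¹)^q = s⁻¹ := by rw [inv_pow, hcardpow]
  refine ⟨?_, ?_, ?_⟩
  · rw [hval]
    intro h
    exact hs (by rwa [inv_eq_one] at h)
  · rw [hval, hnum]
    have e1 : 1 + (s^(q+1))⁻¹ = (1 + s^(q+1))/s^(q+1) := by
      field_simp
      ring
    rw [e1, div_div_eq_mul_div]
    congr 1
    rw [pow_succ]
    field_simp
  · intro h
    apply hs
    have hss : (s^q)⁻¹ * s^q = 1 := inv_mul_cancel₀ hsq0
    rw [h] at hss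
    rw [pow_succ]
    linear_combination hss

end Aux

/-- The set N = {s^q/(1+s^{q+1}) : s^{q+1} ≠ 1} has (q²−q)/2 elements. -/
theorem stmt_6 (m : ℕ) (hm : 0 < m) (F : Type*) [Field F] [Fintype F]
    (hcard : Fintype.card F = 2 ^ (2 * m)) :
    {a : F | ∃ s : F, s ^ (2 ^ m + 1) ≠ 1 ∧
      a = s ^ (2 ^ m) / (1 + s ^ (2 ^ m + 1))}.ncard =
      ((2 ^ m) ^ 2 - 2 ^ m) / 2 := by
  classical
  set q : ℕ := 2 ^ m with hqdef
  have hq1 : 2 ≤ q := by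
    calc 2 = 2^1 := (pow_one 2).symm
      _ ≤ 2^m := Nat.pow_le_pow_right (by norm_num) hm
  have hq0 : q ≠ 0 := by omega
  have hcardq : Fintype.card F = q^2 := by
    rw [hcard, hqdef, ← pow_mul, mul_comm]
  -- characteristic 2
  obtain ⟨p, hp⟩ := CharP.exists F
  haveI := hp
  obtain ⟨n, hpp, hcard2⟩ := FiniteField.card F p
  have hp2 : p = 2 := by
    have h1 : p ∣ 2^(2*m) := by
      rw [← hcard, hcard2]
      exact dvd_pow_self p n.ne_zero
    have := hpp.dvd_of_dvd_pow h1
    exact (Nat.prime_dvd_prime_iff_eq hpp Nat.prime_two).mp this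
  subst hp2
  haveI : Fact (Nat.Prime 2) := ⟨Nat.prime_two⟩
  have h2 : (2:F) = 0 := by exact_mod_cast CharP.cast_eq_zero F 2
  have hfrob : ∀ x y : F, (x+y)^q = x^q + y^q := by
    intro x y
    rw [hqdef]
    exact add_pow_char_pow x y 2 m
  have hcardpow : ∀ x : F, (x^q)^q = x := by
    intro x
    rw [← pow_mul, show q*q = Fintype.card F from by rw [hcardq, pow_two]]
    exact FiniteField.pow_card x
  set f : F → F := fun s => s^q/(1+s^(q+1)) with hf
  set D : Finset F := Finset.univ.filter (fun s => ¬ s^(q+1) = 1) with hD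
  set N : Finset F := D.image f with hN
  have hsetN : {a : F | ∃ s : F, s ^ (q + 1) ≠ 1 ∧ a = s ^ q / (1 + s ^ (q+1))} = ↑N := by
    ext a
    simp only [Set.mem_setOf_eq, hN, Finset.coe_image, Set.mem_image, Finset.mem_coe, hD,
      Finset.mem_filter, Finset.mem_univ, true_and, hf]
    constructor
    · rintro ⟨s, hs, rfl⟩; exact ⟨s, hs, rfl⟩
    · rintro ⟨s, hs, rfl⟩; exact ⟨s, hs, rfl⟩
  rw [hsetN, Set.ncard_coe_finset]
  -- membership of 0
  have h0D : (0:F) ∈ D := by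
    simp only [hD, Finset.mem_filter, Finset.mem_univ, true_and]
    rw [zero_pow (by omega : q + 1 ≠ 0)]
    exact zero_ne_one
  have hf0 : f 0 = 0 := by
    simp only [hf]
    rw [zero_pow hq0, zero_div]
  have h0N : (0:F) ∈ N := Finset.mem_image.mpr ⟨0, h0D, hf0⟩
  -- cardinality of D
  have hRcard : (Finset.univ.filter (fun s : F => s^(q+1) = 1)).card = q + 1 := by
    obtain ⟨g, hg⟩ := IsCyclic.exists_generator (α := Fˣ)
    have horder : orderOf g = Fintype.card F - 1 := by
      rw [orderOf_eq_card_of_forall_mem_zpowers hg, ← Nat.card_eq_fintype_card,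
        Nat.card_units, Nat.card_eq_fintype_card]
    have hprim : IsPrimitiveRoot ((g : Fˣ) : F) (Fintype.card F - 1) := by
      rw [← horder]
      exact IsPrimitiveRoot.coe_units_iff.mpr (IsPrimitiveRoot.orderOf g)
    have hfac : Fintype.card F - 1 = (q-1)*(q+1) := by
      rw [hcardq]
      have h1 : 1 ≤ q := by omega
      have h1' : 1 ≤ q^2 := Nat.one_le_pow _ _ (by omega)
      zify [h1, h1']
      ring
    have hpos : 0 < Fintype.card F - 1 := by
      rw [hcardq]
      have : 4 ≤ q^2 := by
        calc 4 = 2*2 := rfl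
          _ ≤ q*q := Nat.mul_le_mul hq1 hq1
          _ = q^2 := (pow_two q).symm
      omega
    have hzeta : IsPrimitiveRoot (((g : Fˣ) : F)^(q-1)) (q+1) :=
      IsPrimitiveRoot.pow hpos hprim hfac
    have hcardroots := hzeta.card_nthRootsFinset
    have hset : Finset.univ.filter (fun s : F => s^(q+1) = 1)
        = Polynomial.nthRootsFinset (q+1) (1 : F) := by
      ext x
      rw [Finset.mem_filter, Polynomial.mem_nthRootsFinset (by omega : 0 < q + 1) (1 : F)]
      simp
    rw [hset, hcardroots]
  have hDcard : D.card = q^2 - (q+1) := by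
    have hsplit := Finset.card_filter_add_card_filter_not
      (s := (Finset.univ : Finset F)) (p := fun s : F => s^(q+1) = 1)
    rw [Finset.card_univ, hcardq, hRcard] at hsplit
    have : D.card = (Finset.univ.filter (fun s : F => ¬ s^(q+1) = 1)).card := by rw [hD]
    omega
  -- fiber over 0
  have hfib0 : (D.filter (fun s => f s = 0)).card = 1 := by
    have : D.filter (fun s => f s = 0) = {0} := by
      ext t
      simp only [Finset.mem_filter, Finset.mem_singleton, hD, Finset.mem_univ, true_and]
      constructor
      · rintro ⟨ht, hft⟩
        simp only [hf] at hft
        rcases div_eq_zero_iff.mp hft with h' | h'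
        · exact (pow_eq_zero_iff hq0).mp h'
        · exact absurd h' (aux_den_ne h2 ht)
      · rintro rfl
        refine ⟨?_, hf0⟩
        rw [zero_pow (by omega : q+1 ≠ 0)]
        exact zero_ne_one
    rw [this, Finset.card_singleton]
  -- fibers over nonzero values
  have hfib2 : ∀ b ∈ N, b ≠ 0 → (D.filter (fun s => f s = b)).card = 2 := by
    intro b hbN hb0
    obtain ⟨s, hsD, hfs⟩ := Finset.mem_image.mp hbN
    have hs : s^(q+1) ≠ 1 := by
      simpa only [hD, Finset.mem_filter, Finset.mem_univ, true_and] using hsD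
    have hs0 : s ≠ 0 := by
      rintro rfl
      apply hb0
      rw [← hfs, hf0]
    obtain ⟨hinv1, hinv2, hinv3⟩ := aux_inv hq0 hcardpow hs0 hs
    have hfilter : D.filter (fun t => f t = b) = {s, (s^q)⁻¹} := by
      ext t
      simp only [Finset.mem_filter, Finset.mem_insert, Finset.mem_singleton, hD,
        Finset.mem_univ, true_and]
      constructor
      · rintro ⟨ht, hft⟩
        have heq : t^q/(1+t^(q+1)) = s^q/(1+s^(q+1)) := by
          have : f t = f s := by rw [hft, ← hfs]
          simpa only [hf] using this
        exact aux_key hq0 h2 hfrob hcardpow hs0 hs ht heq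
      · rintro (rfl | rfl)
        · exact ⟨hs, hfs⟩
        · refine ⟨hinv1, ?_⟩
          rw [← hfs]
          simpa only [hf] using hinv2
    rw [hfilter]
    exact Finset.card_pair (Ne.symm hinv3)
  -- sum of fiber cardinalities
  have hsum := Finset.card_eq_sum_card_image f D
  rw [← hN] at hsum
  rw [← Finset.insert_erase h0N, Finset.sum_insert (Finset.notMem_erase _ _)] at hsum
  have hconst : ∑ b ∈ N.erase 0, (D.filter (fun s => f s = b)).card
      = (N.erase 0).card * 2 :=
    Finset.sum_const_nat (fun b hb =>
      hfib2 b (Finset.mem_of_mem_erase hb) (Finset.ne_of_mem_erase hb))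
  rw [hfib0, hconst, Finset.card_erase_of_mem h0N] at hsum
  have hNpos : 1 ≤ N.card := Finset.card_pos.mpr ⟨0, h0N⟩
  have h2q : 2*q ≤ q^2 := by
    rw [pow_two]
    exact Nat.mul_le_mul_right q hq1
  -- final arithmetic
  have hQ : q^2 = q*q := pow_two q
  omega
end

section
/- Let q = 2^m and s ∈ F_{q^3} with s^{1+q+q^2} ≠ 1. Set a = s^{q+q^2}/(1 + s^{1+q+q^2}) and c = s^{q^2}/(1 + s^{1+q+q^2}). Then for every ε ∈ F_{q^3}^*, ε^{q^2+q+1} + Tr_{F_{q^3}/F_q}(ε^q·(c·ε + (a·ε)^{q^2})^2) ≠ 0. -/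
/-- Char-2 polynomial identity underlying the planarity computation. -/
lemma aux_id_stmt11 (F : Type*) [Field F] (h2 : (2 : F) = 0)
    (e0 e1 e2 s0 s1 s2 : F) :
    e0 * e1 * e2 * (1 + s0 * s1 * s2) ^ 2 + (e1 * (s2 * e0 + s0 * s1 * e2) ^ 2 +
      e2 * (s0 * e1 + s1 * s2 * e0) ^ 2 + e0 * (s1 * e2 + s2 * s0 * e1) ^ 2)
      = (e0 + s0 ^ 2 * e1) * (e1 + s1 ^ 2 * e2) * (e2 + s2 ^ 2 * e0) := by
  linear_combination (4 * e0 * e1 * e2 * s0 * s1 * s2) * h2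

/-- The nonvanishing condition equivalent to planarity of
P(x) = a x^{q+1} + c x^{q^2+1} over F_{q^3}. -/
theorem stmt_11 (m : ℕ) (hm : 0 < m) (F : Type*) [Field F] [Fintype F]
    (hcard : Fintype.card F = 2 ^ (3 * m)) (s : F)
    (hs : s ^ (1 + 2 ^ m + (2 ^ m) ^ 2) ≠ 1) (a c : F)
    (ha : a = s ^ (2 ^ m + (2 ^ m) ^ 2) / (1 + s ^ (1 + 2 ^ m + (2 ^ m) ^ 2)))
    (hc : c = s ^ ((2 ^ m) ^ 2) / (1 + s ^ (1 + 2 ^ m + (2 ^ m) ^ 2))) :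
    ∀ ε : F, ε ≠ 0 →
      ε ^ ((2 ^ m) ^ 2 + 2 ^ m + 1) +
        ((ε ^ (2 ^ m) * (c * ε + (a * ε) ^ ((2 ^ m) ^ 2)) ^ 2) +
          (ε ^ (2 ^ m) * (c * ε + (a * ε) ^ ((2 ^ m) ^ 2)) ^ 2) ^ (2 ^ m) +
          (ε ^ (2 ^ m) * (c * ε + (a * ε) ^ ((2 ^ m) ^ 2)) ^ 2) ^ ((2 ^ m) ^ 2)) ≠ 0 := by
  intro ε hε
  set q := 2 ^ m with hq
  -- characteristic 2
  obtain ⟨p, hpI⟩ := CharP.exists F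
  haveI := hpI
  obtain ⟨n, hpprime, hn⟩ := FiniteField.card F p
  have hp2 : p = 2 := by
    have hdvd : p ∣ 2 ^ (3 * m) := by
      rw [← hcard, hn]; exact dvd_pow_self p n.pos.ne'
    exact (Nat.prime_dvd_prime_iff_eq hpprime Nat.prime_two).mp
      (hpprime.dvd_of_dvd_pow hdvd)
  subst hp2
  haveI : Fact (Nat.Prime 2) := ⟨Nat.prime_two⟩
  have h2 : (2 : F) = 0 := by exact_mod_cast CharP.cast_eq_zero F 2
  have hfrob : ∀ x y : F, (x + y) ^ q = x ^ q + y ^ q := by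
    intro x y; rw [hq]; exact add_pow_char_pow x y 2 m
  have hcube : ∀ x : F, ((x ^ q) ^ q) ^ q = x := by
    intro x
    rw [← pow_mul, ← pow_mul, hq]
    have h3 : 2 ^ m * (2 ^ m * 2 ^ m) = 2 ^ (3 * m) := by
      rw [← pow_add, ← pow_add]; congr 1; ring
    rw [h3, ← hcard]
    exact FiniteField.pow_card x
  have hq2 : ∀ x : F, x ^ q ^ 2 = (x ^ q) ^ q := by
    intro x; rw [sq, pow_mul]
  set s1 := s ^ q with hs1
  set s2 := s1 ^ q with hs2
  set e1 := ε ^ q with he1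
  set e2 := e1 ^ q with he2
  have hs2q : s2 ^ q = s := by rw [hs2, hs1]; exact hcube s
  have he2q : e2 ^ q = ε := by rw [he2, he1]; exact hcube ε
  set d := 1 + s * s1 * s2 with hd
  have hsn : s ^ (1 + q + q ^ 2) = s * s1 * s2 := by
    rw [pow_add, pow_add, pow_one, sq, pow_mul, ← hs1, ← hs2]
  have hsn2 : s ^ (q + q ^ 2) = s1 * s2 := by
    rw [pow_add, sq, pow_mul, ← hs1, ← hs2]
  have hsn3 : s ^ (q ^ 2) = s2 := by
    rw [sq, pow_mul, ← hs1, ← hs2]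
  have hs' : s * s1 * s2 ≠ 1 := by rw [← hsn]; exact hs
  have hd0 : d ≠ 0 := by
    intro h
    rw [hd] at h
    apply hs'
    linear_combination h - h2
  have hdq : d ^ q = d := by
    rw [hd, hfrob, one_pow, mul_pow, mul_pow, hs2q, ← hs1, ← hs2]
    ring
  have hd2q : (d ^ 2) ^ q = d ^ 2 := by
    rw [pow_right_comm, hdq]
  have ha' : a = s1 * s2 / d := by
    rw [ha, hsn2, hsn, ← hd]
  have hc' : c = s2 / d := by
    rw [hc, hsn3, hsn, ← hd]
  have haq : a ^ q = s2 * s / d := by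
    rw [ha', div_pow, hdq, mul_pow, hs2q, ← hs2]
  have haqq : a ^ q ^ 2 = s * s1 / d := by
    rw [hq2, haq, div_pow, hdq, mul_pow, hs2q, ← hs1]
  set T0 := e1 * (c * ε + (a * ε) ^ q ^ 2) ^ 2 with hT0def
  have hu : c * ε + (a * ε) ^ q ^ 2 = (s2 * ε + s * s1 * e2) / d := by
    rw [mul_pow, haqq, hc', hq2, ← he1, ← he2]
    field_simp
  have hX1q : (s2 * ε + s * s1 * e2) ^ q = s * e1 + s1 * s2 * ε := by
    rw [hfrob, mul_pow, mul_pow, mul_pow, hs2q, he2q, ← he1, ← hs1, ← hs2]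
  have hX2q : (s * e1 + s1 * s2 * ε) ^ q = s1 * e2 + s2 * s * e1 := by
    rw [hfrob, mul_pow, mul_pow, mul_pow, hs2q, ← hs1, ← hs2, ← he1, ← he2]
  have hT0 : T0 = e1 * (s2 * ε + s * s1 * e2) ^ 2 / d ^ 2 := by
    rw [hT0def, hu, div_pow, mul_div_assoc]
  have hT1 : T0 ^ q = e2 * (s * e1 + s1 * s2 * ε) ^ 2 / d ^ 2 := by
    rw [hT0, div_pow, mul_pow, hd2q, ← he2, pow_right_comm, hX1q]
  have hT2 : T0 ^ q ^ 2 = ε * (s1 * e2 + s2 * s * e1) ^ 2 / d ^ 2 := by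
    rw [hq2, hT1, div_pow, mul_pow, hd2q, he2q, pow_right_comm, hX2q]
  have hN : ε ^ (q ^ 2 + q + 1) = ε * e1 * e2 := by
    rw [pow_add, pow_add, pow_one, sq, pow_mul, ← he1, ← he2]
    ring
  have key : ε ^ (q ^ 2 + q + 1) + (T0 + T0 ^ q + T0 ^ q ^ 2)
      = (ε + s ^ 2 * e1) * (e1 + s1 ^ 2 * e2) * (e2 + s2 ^ 2 * ε) / d ^ 2 := by
    rw [hN, hT2, hT1, hT0, ← aux_id_stmt11 F h2 ε e1 e2 s s1 s2, hd]
    have hd0' : (1 : F) + s * s1 * s2 ≠ 0 := by rw [← hd]; exact hd0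
    field_simp
    have hd0'' : (1 : F) + s2 * s * s1 ≠ 0 := by
      rw [show s2 * s * s1 = s * s1 * s2 by ring]; exact hd0'
    rw [eq_div_iff (pow_ne_zero 2 hd0''), add_mul,
      div_mul_cancel₀ _ (pow_ne_zero 2 hd0'')]
  rw [key]
  apply div_ne_zero _ (pow_ne_zero 2 hd0)
  have hZ : ε + s ^ 2 * e1 ≠ 0 := by
    intro h0
    have heq : ε = s ^ 2 * e1 := by linear_combination h0 - (s ^ 2 * e1) * h2
    have heq1 : e1 = s1 ^ 2 * e2 := by
      calc e1 = ε ^ q := he1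
        _ = (s ^ 2 * e1) ^ q := by rw [← heq]
        _ = s1 ^ 2 * e2 := by rw [mul_pow, pow_right_comm, ← hs1, ← he2]
    have heq2 : e2 = s2 ^ 2 * ε := by
      calc e2 = e1 ^ q := he2
        _ = (s1 ^ 2 * e2) ^ q := by rw [← heq1]
        _ = s2 ^ 2 * ε := by rw [mul_pow, pow_right_comm, ← hs2, he2q]
    have hne : ε * e1 * e2 ≠ 0 := by
      apply mul_ne_zero (mul_ne_zero hε _)
      · rw [he2, he1]; exact pow_ne_zero _ (pow_ne_zero _ hε)
      · rw [he1]; exact pow_ne_zero _ hε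
    have h1 : (s * s1 * s2) ^ 2 * (ε * e1 * e2) = 1 * (ε * e1 * e2) := by
      rw [one_mul]
      calc (s * s1 * s2) ^ 2 * (ε * e1 * e2)
          = (s ^ 2 * e1) * (s1 ^ 2 * e2) * (s2 ^ 2 * ε) := by ring
        _ = ε * e1 * e2 := by rw [← heq, ← heq1, ← heq2]
    have hone : (s * s1 * s2) ^ 2 = 1 := mul_right_cancel₀ hne h1
    apply hs'
    have hsq : (s * s1 * s2 + 1) ^ 2 = 0 := by
      linear_combination hone + (s * s1 * s2) * h2 + h2
    have hz := pow_eq_zero_iff (two_ne_zero) |>.mp hsq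
    linear_combination hz - h2
  have hZq : (ε + s ^ 2 * e1) ^ q = e1 + s1 ^ 2 * e2 := by
    rw [hfrob, mul_pow, ← he1, ← he2, pow_right_comm, ← hs1]
  have hZqq : (e1 + s1 ^ 2 * e2) ^ q = e2 + s2 ^ 2 * ε := by
    rw [hfrob, mul_pow, he2q, ← he2, pow_right_comm, ← hs2]
  rw [← hZqq, ← hZq]
  exact mul_ne_zero (mul_ne_zero hZ (pow_ne_zero _ hZ))
    (pow_ne_zero _ (pow_ne_zero _ hZ))
end

section
/- Let q = 2^m, a, b, c ∈ F_{q^3} with b = 0 and c = a^q. Then the function P(x) = a·x^{2(q+1)} + b·x^{2(q^2+q)} + c·x^{2(q^2+1)} is planar over F_{q^3}: for every δ ∈ F_{q^3}^*, x ↦ P(x+δ) + P(x) + δx is a bijection of F_{q^3}. -/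
/-- P(x) = a x^{2(q+1)} + b x^{2(q²+q)} + c x^{2(q²+1)} with b = 0, c = a^q
is planar over F_{q^3}. -/
theorem stmt_13 (m : ℕ) (hm : 0 < m) (F : Type*) [Field F] [Fintype F]
    (hcard : Fintype.card F = 2 ^ (3 * m)) (a b c : F)
    (hb : b = 0) (hc : c = a ^ (2 ^ m))
    (P : F → F)
    (hP : ∀ x : F, P x = a * x ^ (2 * (2 ^ m + 1)) +
      b * x ^ (2 * ((2 ^ m) ^ 2 + 2 ^ m)) + c * x ^ (2 * ((2 ^ m) ^ 2 + 1))) :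
    ∀ δ : F, δ ≠ 0 →
      Function.Bijective (fun x : F => P (x + δ) + P x + δ * x) := by
  -- characteristic 2
  haveI := ringChar.charP F
  have hchar : ringChar F = 2 := by
    have hp : (ringChar F).Prime := CharP.char_is_prime F (ringChar F)
    have h2 : (2 : ℕ) ∣ ringChar F := by
      rw [prime_dvd_char_iff_dvd_card, hcard]
      exact dvd_pow_self 2 (by positivity : 0 < 3 * m).ne'
    exact ((Nat.prime_dvd_prime_iff_eq Nat.prime_two hp).mp h2).symm
  haveI : CharP F 2 := hchar ▸ ringChar.charP F
  have htwo : (2 : F) = 0 := CharTwo.two_eq_zero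
  have hsq : ∀ s t : F, (s + t) ^ 2 = s ^ 2 + t ^ 2 := fun s t => CharTwo.add_sq s t
  -- the Frobenius power f t = t^(2^m)
  set f : F → F := fun t => t ^ 2 ^ m with hf
  have hf_add : ∀ s t : F, f (s + t) = f s + f t := by
    intro s t; simp only [hf]; exact add_pow_char_pow s t 2 m
  have hf_mul : ∀ s t : F, f (s * t) = f s * f t := by
    intro s t; simp only [hf]; exact mul_pow s t _
  have hf_sq : ∀ t : F, f (t ^ 2) = (f t) ^ 2 := by
    intro t; simp only [hf]; rw [← pow_mul, ← pow_mul, mul_comm]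
  have e1 : 2 ^ m * (2 ^ m * 2 ^ m) = 2 ^ (3 * m) := by
    rw [show 3 * m = m + (m + m) from by ring, pow_add, pow_add]
  have hf3 : ∀ t : F, f (f (f t)) = t := by
    intro t; simp only [hf]; rw [← pow_mul, ← pow_mul, e1, ← hcard]
    exact FiniteField.pow_card t
  have hf1 : f (1 : F) = 1 := by simp only [hf]; exact one_pow _
  have hf0 : f (0 : F) = 0 := by
    simp only [hf]; exact zero_pow (by positivity : 0 < 2 ^ m).ne'
  -- rewrite P
  have hq1 : ∀ x : F, x ^ (2 * (2 ^ m + 1)) = (x ^ 2 ^ m * x) ^ 2 := by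
    intro x
    rw [show 2 * (2 ^ m + 1) = (2 ^ m + 1) * 2 from by ring, pow_mul, pow_add, pow_one]
  have hq2 : ∀ x : F, x ^ (2 * ((2 ^ m) ^ 2 + 1)) = ((x ^ 2 ^ m) ^ 2 ^ m * x) ^ 2 := by
    intro x
    rw [show 2 * ((2 ^ m) ^ 2 + 1) = (2 ^ m * 2 ^ m + 1) * 2 from by ring,
      pow_mul, pow_add, pow_one, pow_mul]
  have hPf : ∀ x : F, P x = a * (f x * x) ^ 2 + f a * (f (f x) * x) ^ 2 := by
    intro x
    rw [hP x, hb, hc, hq1, hq2]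
    simp only [hf]
    ring
  intro δ hδ
  apply Finite.injective_iff_bijective.mp
  intro x1 x2 h
  dsimp only at h
  -- expansion of squares of products in char 2
  have expand_sq : ∀ u v s t : F,
      ((u + v) * (s + t)) ^ 2 = (u * s) ^ 2 + (u * t) ^ 2 + (v * s) ^ 2 + (v * t) ^ 2 := by
    intro u v s t
    rw [show (u + v) * (s + t) = u * s + u * t + (v * s + v * t) from by ring,
      hsq, hsq, hsq]
    ring
  -- the difference map is an additive map plus the constant P δ
  have hDP : ∀ x : F, P (x + δ) + P x + δ * x =
      a * δ ^ 2 * (f x) ^ 2 + f a * δ ^ 2 * (f (f x)) ^ 2 +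
        (a * (f δ) ^ 2 + f a * (f (f δ)) ^ 2) * x ^ 2 + δ * x + P δ := by
    intro x
    rw [hPf (x + δ), hPf x, hPf δ, hf_add, hf_add, expand_sq, expand_sq]
    linear_combination (a * (f x * x) ^ 2 + f a * (f (f x) * x) ^ 2) * htwo
  rw [hDP x1, hDP x2] at h
  -- the kernel equation for x1 + x2
  have hE : a * δ ^ 2 * (f (x1 + x2)) ^ 2 + f a * δ ^ 2 * (f (f (x1 + x2))) ^ 2 +
      (a * (f δ) ^ 2 + f a * (f (f δ)) ^ 2) * (x1 + x2) ^ 2 + δ * (x1 + x2) = 0 := by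
    rw [hf_add, hf_add, hsq, hsq, hsq]
    linear_combination h + (a * δ ^ 2 * (f x2) ^ 2 + f a * δ ^ 2 * (f (f x2)) ^ 2 +
      (a * (f δ) ^ 2 + f a * (f (f δ)) ^ 2) * x2 ^ 2 + δ * x2) * htwo
  -- main kernel-triviality argument
  have main : ∀ s : F,
      a * δ ^ 2 * (f s) ^ 2 + f a * δ ^ 2 * (f (f s)) ^ 2 +
        (a * (f δ) ^ 2 + f a * (f (f δ)) ^ 2) * s ^ 2 + δ * s = 0 → s = 0 := by
    intro s hEs
    by_contra hs0
    set y := s / δ with hy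
    have hsy : s = δ * y := by
      rw [hy, mul_div_cancel₀ _ hδ]
    have hy0 : y ≠ 0 := by
      rw [hy]; exact div_ne_zero hs0 hδ
    rw [hsy] at hEs
    simp only [hf_mul] at hEs
    set z := f y + y with hz
    have hfzy : f z = f (f y) + f y := by rw [hz]; exact hf_add _ _
    have hffz : f (f z) = f z + z := by
      rw [hz]
      simp only [hf_add, hf3]
      linear_combination (-(f y)) * htwo
    -- the key reduced equation (Y)
    have h'' : δ ^ 2 * y = δ ^ 2 * (a * (f δ) ^ 2 * (f y + y) ^ 2 +
        f a * (f (f δ)) ^ 2 * ((f (f y) + f y) ^ 2 + (f y + y) ^ 2)) := by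
      rw [hsq (f (f y)) (f y), hsq (f y) y]
      linear_combination hEs - δ ^ 2 * (a * (f δ) ^ 2 * ((f y) ^ 2 + y ^ 2) +
        f a * (f (f δ)) ^ 2 * ((f (f y)) ^ 2 + (f y) ^ 2 + y ^ 2)) * htwo
    rw [← hfzy, ← hz] at h''
    have hY : y = a * (f δ) ^ 2 * z ^ 2 + f a * (f (f δ)) ^ 2 * ((f z) ^ 2 + z ^ 2) :=
      mul_left_cancel₀ (pow_ne_zero 2 hδ) h''
    -- apply f to (Y)
    have hfy : f y = f a * (f (f δ)) ^ 2 * (f z) ^ 2 + f (f a) * δ ^ 2 * z ^ 2 := by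
      have h1 := congrArg f hY
      simp only [hf_add, hf_mul, hf_sq, hf3] at h1
      rw [hffz, hsq] at h1
      linear_combination h1 + (f (f a) * δ ^ 2 * (f z) ^ 2) * htwo
    -- z = C z^2
    have hzC : z = (a * (f δ) ^ 2 + f a * (f (f δ)) ^ 2 + f (f a) * δ ^ 2) * z ^ 2 := by
      linear_combination hz + hfy + hY + (f a * (f (f δ)) ^ 2 * (f z) ^ 2) * htwo
    rcases eq_or_ne z 0 with h0 | h0
    · rw [h0] at hY
      simp [hf0] at hY
      exact hy0 hY
    · have hC : (a * (f δ) ^ 2 + f a * (f (f δ)) ^ 2 + f (f a) * δ ^ 2) * z = 1 := by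
        apply mul_left_cancel₀ h0
        linear_combination -hzC
      have hCne : (a * (f δ) ^ 2 + f a * (f (f δ)) ^ 2 + f (f a) * δ ^ 2) ≠ 0 :=
        left_ne_zero_of_mul_eq_one hC
      have hfC : f (a * (f δ) ^ 2 + f a * (f (f δ)) ^ 2 + f (f a) * δ ^ 2) =
          a * (f δ) ^ 2 + f a * (f (f δ)) ^ 2 + f (f a) * δ ^ 2 := by
        simp only [hf_add, hf_mul, hf_sq, hf3]
        ring
      have h3 : (a * (f δ) ^ 2 + f a * (f (f δ)) ^ 2 + f (f a) * δ ^ 2) * f z = 1 := by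
        have h4 := congrArg f hC
        rw [hf_mul, hfC, hf1] at h4
        exact h4
      have hfz : f z = z := by
        apply mul_left_cancel₀ hCne
        rw [h3, hC]
      rw [hfz, hfz] at hffz
      exact h0 (by linear_combination -hffz)
  have hs := main (x1 + x2) hE
  linear_combination hs - x2 * htwo
end

section
/- Let F be a finite field of characteristic 2, n ≥ 1, and let P : F_{2^n} → F_{2^n} be a quadratic planar function (i.e., P is a sum of monomials c·x^{2^i+2^j} and x ↦ P(x+a)+P(x)+ax is bijective for all a ≠ 0). Define x * y = xy + P(x+y) + P(x) + P(y). Then (F_{2^n}, +, *) has no zero divisors: x * y = 0 implies x = 0 or y = 0. -/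
/-- The presemifield product x*y = xy + P(x+y) + P(x) + P(y) attached to a
quadratic planar function P has no zero divisors. -/
theorem stmt_17 (n : ℕ) (hn : 0 < n) (F : Type*) [Field F] [Fintype F]
    (hcard : Fintype.card F = 2 ^ n) (P : F → F)
    (hquad : ∃ c : ℕ → ℕ → F, ∀ x : F,
      P x = ∑ i ∈ Finset.range n, ∑ j ∈ Finset.range n, c i j * x ^ (2 ^ i + 2 ^ j))
    (hplanar : ∀ a : F, a ≠ 0 →
      Function.Bijective (fun x : F => P (x + a) + P x + a * x)) :
    ∀ x y : F, x * y + P (x + y) + P x + P y = 0 → x = 0 ∨ y = 0 := by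
  -- characteristic 2
  have hchar : ringChar F = 2 := by
    rw [FiniteField.even_card_iff_char_two, hcard]
    have : 2 ∣ 2 ^ n := dvd_pow_self 2 hn.ne'
    omega
  have h2 : (2 : F) = 0 := by
    have := ringChar.charP F
    rw [hchar] at this
    exact this.cast_eq_zero
  obtain ⟨c, hc⟩ := hquad
  have hP0 : P 0 = 0 := by
    rw [hc]
    apply Finset.sum_eq_zero
    intro i _
    apply Finset.sum_eq_zero
    intro j _
    rw [zero_pow (by positivity), mul_zero]
  intro x y h
  by_cases hy : y = 0
  · exact Or.inr hy
  · left
    have hinj := (hplanar y hy).injective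
    have : P (x + y) + P x + y * x = P (0 + y) + P 0 + y * 0 := by
      rw [zero_add, hP0, mul_zero, add_zero, add_zero]
      linear_combination h - P y * h2
    exact hinj this
end

section
/- Let q = 2^m with m even and ω ∈ F_{q^4} satisfying ω² + ω + 1 = 0 (so ω ∈ F_4 ⊆ F_q and ω^q = ω). Define L(x) = x + ω x^q + x^{q^2} + ω² x^{q^3} and M(x) = x + ω² x^q + x^{q^2} + ω x^{q^3} on F_{q^4}. Then M(L(x)) = x for all x ∈ F_{q^4}; i.e., M = L^{-1}. -/
/-- M(x) = x + ω²x^q + x^{q²} + ωx^{q³} is the inverse of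
L(x) = x + ωx^q + x^{q²} + ω²x^{q³} on F_{q^4}, when m is even and ω²+ω+1 = 0. -/
theorem stmt_18 (m : ℕ) (hm : 0 < m) (hme : Even m) (F : Type*) [Field F] [Fintype F]
    (hcard : Fintype.card F = 2 ^ (4 * m)) (ω : F)
    (hω : ω ^ 2 + ω + 1 = 0) :
    ∀ x : F,
      (fun y : F => y + ω ^ 2 * y ^ (2 ^ m) + y ^ ((2 ^ m) ^ 2) + ω * y ^ ((2 ^ m) ^ 3))
        ((fun y : F => y + ω * y ^ (2 ^ m) + y ^ ((2 ^ m) ^ 2) + ω ^ 2 * y ^ ((2 ^ m) ^ 3)) x)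
        = x := by
  -- characteristic 2
  have hc0 : ((Fintype.card F : F)) = 0 := FiniteField.cast_card_eq_zero F
  rw [hcard] at hc0
  push_cast at hc0
  have h2 : (2 : F) = 0 := by
    have h4m : 4 * m ≠ 0 := by omega
    exact pow_eq_zero_iff h4m |>.mp hc0
  haveI : Fact (Nat.Prime 2) := ⟨Nat.prime_two⟩
  haveI hch : CharP F 2 := (CharP.charP_iff_prime_eq_zero Nat.prime_two).2 h2
  -- ω^3 = 1
  have hω3 : ω ^ 3 = 1 := by
    have h : ω ^ 3 - 1 = (ω - 1) * (ω ^ 2 + ω + 1) := by ring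
    rw [hω, mul_zero, sub_eq_zero] at h
    exact h
  -- ω^(2^m) = ω
  have hωq : ω ^ (2 ^ m) = ω := by
    obtain ⟨t, rfl⟩ := hme
    have hmod : (2 : ℕ) ^ (t + t) % 3 = 1 := by
      have : (2 : ℕ) ^ (t + t) = 4 ^ t := by
        rw [pow_add, show (4 : ℕ) = 2 * 2 by norm_num, mul_pow]
      rw [this]
      have h4 : (4 : ℕ) ≡ 1 [MOD 3] := by decide
      have := h4.pow t
      simpa [Nat.ModEq, Nat.one_pow] using this
    have hdecomp : 2 ^ (t + t) = 3 * (2 ^ (t + t) / 3) + 1 := by omega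
    rw [hdecomp, pow_add, pow_mul, hω3, one_pow, one_mul, pow_one]
  set q : ℕ := 2 ^ m with hq
  -- x^(q^4) = x
  have hx4 : ∀ z : F, z ^ (q ^ 4) = z := by
    intro z
    have : q ^ 4 = 2 ^ (4 * m) := by
      rw [hq, ← pow_mul, mul_comm]
    rw [this, ← hcard]
    exact FiniteField.pow_card z
  -- Frobenius additivity
  have hadd : ∀ a b : F, (a + b) ^ q = a ^ q + b ^ q := fun a b =>
    add_pow_char_pow a b 2 m
  intro x
  simp only []
  set b : F := x ^ (2 ^ m) with hb
  set c : F := x ^ ((2 ^ m) ^ 2) with hc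
  set d : F := x ^ ((2 ^ m) ^ 3) with hd
  have hbq : b ^ q = c := by rw [hb, hc, ← pow_mul, ← pow_two]
  have hcq : c ^ q = d := by
    rw [hc, hd, ← pow_mul, ← pow_succ]
  have hdq : d ^ q = x := by
    rw [hd, ← pow_mul, ← pow_succ]
    exact hx4 x
  have hωq2 : (ω ^ 2) ^ q = ω ^ 2 := by
    rw [← pow_mul, mul_comm, pow_mul, hωq]
  -- powers of the image y := L x
  have hy1 : (x + ω * b + c + ω ^ 2 * d) ^ q
      = b + ω * c + d + ω ^ 2 * x := by
    rw [hadd, hadd, hadd, mul_pow, mul_pow, hωq, hωq2, hbq, hcq, hdq]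
  have hstep : ∀ (z : F) (n : ℕ), z ^ (q ^ (n + 1)) = (z ^ (q ^ n)) ^ q := fun z n => by
    rw [pow_succ, pow_mul]
  have hy2 : (x + ω * b + c + ω ^ 2 * d) ^ (q ^ 2) = c + ω * d + x + ω ^ 2 * b := by
    rw [show (2 : ℕ) = 1 + 1 by norm_num, hstep, pow_one, hy1,
      hadd, hadd, hadd, mul_pow, mul_pow, hωq, hωq2, hbq, hcq, hdq]
  have hy3 : (x + ω * b + c + ω ^ 2 * d) ^ (q ^ 3) = d + ω * x + b + ω ^ 2 * c := by
    rw [show (3 : ℕ) = 2 + 1 by norm_num, hstep, hy2,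
      hadd, hadd, hadd, mul_pow, mul_pow, hωq, hωq2, hbq, hcq, hdq]
  rw [hy1, hy2, hy3]
  linear_combination (x * (ω ^ 2 - ω + 1)) * hω +
    ((b + d) * (ω + ω ^ 2) + c * (1 + ω ^ 3)) * h2
end

section
/- Let q = 2^m with m even, ω ∈ F_q with ω² + ω + 1 = 0. Define on F_{q^4} the product x ∘ y = xy + x^q(ω²y^q + ωy^{q^2} + y^{q^3}) + x^{q^2}(ωy^q + y^{q^2} + ω²y^{q^3}) + x^{q^3}(y^q + ω²y^{q^2} + ωy^{q^3}). Then ∘ is associative: α ∘ (x ∘ y) = (α ∘ x) ∘ y for all α, x, y ∈ F_{q^4}. -/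
/-- The semifield multiplication derived from H(x) = ωx^{q+1} + x^{q²+1} + ω²x^{q³+1}. -/
def circ (q : ℕ) {F : Type*} [Field F] (ω : F) (x y : F) : F :=
  x * y + x ^ q * (ω ^ 2 * y ^ q + ω * y ^ q ^ 2 + y ^ q ^ 3) +
    x ^ q ^ 2 * (ω * y ^ q + y ^ q ^ 2 + ω ^ 2 * y ^ q ^ 3) +
    x ^ q ^ 3 * (y ^ q + ω ^ 2 * y ^ q ^ 2 + ω * y ^ q ^ 3)

/-- The product ∘ on F_{q^4} is associative (m even, ω² + ω + 1 = 0). -/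
theorem stmt_19 (m : ℕ) (hm : 0 < m) (hme : Even m) (F : Type*) [Field F] [Fintype F]
    (hcard : Fintype.card F = 2 ^ (4 * m)) (ω : F)
    (hω : ω ^ 2 + ω + 1 = 0) :
    ∀ α x y : F, circ (2 ^ m) ω α (circ (2 ^ m) ω x y) =
      circ (2 ^ m) ω (circ (2 ^ m) ω α x) y := by
  classical
  -- the characteristic is 2
  have hchar : ringChar F = 2 := by
    obtain ⟨n, hp, hc⟩ := FiniteField.card F (ringChar F)
    rw [hcard] at hc
    have hd : ringChar F ∣ 2 ^ (4 * m) := by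
      rw [hc]
      exact dvd_pow_self _ n.ne_zero
    exact (Nat.prime_dvd_prime_iff_eq hp Nat.prime_two).mp (hp.dvd_of_dvd_pow hd)
  haveI hp2 : CharP F 2 := hchar ▸ ringChar.charP F
  haveI : Fact (Nat.Prime 2) := ⟨Nat.prime_two⟩
  haveI : ExpChar F 2 := .prime Nat.prime_two
  have h2 : (2 : F) = 0 := by
    have := CharP.cast_eq_zero F 2
    exact_mod_cast this
  set f : F →+* F := iterateFrobenius F 2 m with hf
  have hq1 : ∀ z : F, z ^ 2 ^ m = f z := fun z => rfl
  have hq2 : ∀ z : F, z ^ (2 ^ m) ^ 2 = f (f z) := by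
    intro z
    have e : ((2 : ℕ) ^ m) ^ 2 = 2 ^ m * 2 ^ m := by ring
    rw [e, pow_mul, hq1, hq1]
  have hq3 : ∀ z : F, z ^ (2 ^ m) ^ 3 = f (f (f z)) := by
    intro z
    have e : ((2 : ℕ) ^ m) ^ 3 = 2 ^ m * 2 ^ m * 2 ^ m := by ring
    rw [e, pow_mul, pow_mul, hq1, hq1, hq1]
  have hf4 : ∀ z : F, f (f (f (f z))) = z := by
    intro z
    have e : (2 : ℕ) ^ (4 * m) = 2 ^ m * 2 ^ m * 2 ^ m * 2 ^ m := by
      rw [show 4 * m = m + m + m + m from by ring, pow_add, pow_add, pow_add]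
    have hcomp : z ^ ((2 : ℕ) ^ (4 * m)) = f (f (f (f z))) := by
      rw [e, pow_mul, pow_mul, pow_mul, hq1, hq1, hq1, hq1]
    rw [← hcomp, ← hcard]
    exact FiniteField.pow_card z
  have hω4 : ω ^ 4 = ω := by linear_combination (ω ^ 2 - ω) * hω
  obtain ⟨k, hk⟩ := hme
  have hωpow : ∀ j : ℕ, ω ^ (4 : ℕ) ^ j = ω := by
    intro j
    induction j with
    | zero => simp
    | succ n ih => rw [pow_succ, pow_mul, ih]; exact hω4
  have h2m : (2 : ℕ) ^ m = 4 ^ k := by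
    rw [hk, ← two_mul, pow_mul]
    norm_num
  have hfω : f ω = ω := by
    rw [← hq1, h2m]
    exact hωpow k
  intro α x y
  simp only [circ, hq2, hq3, hq1]
  simp only [map_add, map_mul, map_pow, hfω, hf4]
  set a1 := f α with ha1
  set a2 := f a1 with ha2
  set a3 := f a2 with ha3
  set x1 := f x with hx1
  set x2 := f x1 with hx2
  set x3 := f x2 with hx3
  set y1 := f y with hy1
  set y2 := f y1 with hy2
  set y3 := f y2 with hy3
  linear_combination ((-1:F)*a3*x3*y1 + (-1:F)*a3*x1*y2 + (-1:F)*a3*x1*y + (-1:F)*a2*x2*y + (-1:F)*a2*x*y3 + (-1:F)*a2*x*y1 + (-1:F)*a1*x3*y2 + (-1:F)*a1*x3*y + (-1:F)*a1*x1*y3 + (-1:F)*α*x2*y3 + (-1:F)*α*x2*y1 + (-1:F)*α*x*y2 + (-1:F)*ω*a3*x3*y1 + (-1:F)*ω*a3*x3*y + (-1:F)*ω*a3*x1*y2 + (-1:F)*ω*a3*x1*y1 + (-1:F)*ω*a3*x1*y + (-1:F)*ω*a3*x*y2 + (-1:F)*ω*a2*x3*y1 + (-1:F)*ω*a2*x2*y1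 + (-1:F)*ω*a2*x1*y3 + ω*a2*x1*y1 + (-1:F)*ω*a2*x1*y + (-1:F)*ω*a2*x*y3 + (-1:F)*ω*a2*x*y1 + (-1:F)*ω*a2*x*y + (-1:F)*ω*a1*x3*y3 + (-1:F)*ω*a1*x3*y2 + (-1:F)*ω*a1*x3*y + ω*a1*x2*y2 + (-1:F)*ω*a1*x2*y + (-1:F)*ω*a1*x1*y3 + (-1:F)*ω*a1*x1*y2 + (-1:F)*ω*a1*x*y2 + (-1:F)*ω*α*x3*y2 + (-1:F)*ω*α*x3*y1 + (-1:F)*ω*α*x2*y3 + (-1:F)*ω*α*x2*y2 + (-1:F)*ω*α*x1*y3 + (-1:F)*ω*α*x1*y1 + (-1:F)*ω*α*x*y3 + (-1:F)*ω*α*x*y2 + (-1:F)*ω*α*x*y1 + (-1:F)*ω^2*a3*x3*y2 + (-1:F)*ω^2*a3*x3*y1 + ω^2*a3*x2*y2 + (-1:F)*ω^2*a3*x2*y + (-1:F)*ω^2*a3*x1*y2 + (-1:F)*ω^2*a3*x1*y1 + (-1:F)*ω^2*a3*x1*y + (-1:F)*ω^2*a3*x*y2 + ω^2*a2*x3*y3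 + (-1:F)*ω^2*a2*x3*y1 + (-1:F)*ω^2*a2*x3*y + (-1:F)*ω^2*a2*x2*y3 + (-1:F)*ω^2*a2*x1*y3 + (-1:F)*ω^2*a2*x*y3 + (-1:F)*ω^2*a2*x*y1 + (-1:F)*ω^2*a2*x*y + (-1:F)*ω^2*a1*x3*y3 + (-1:F)*ω^2*a1*x3*y2 + (-1:F)*ω^2*a1*x3*y + (-1:F)*ω^2*a1*x1*y3 + (-1:F)*ω^2*a1*x1*y + (-1:F)*ω^2*a1*x*y2 + (-1:F)*ω^2*α*x3*y3 + (-2:F)*ω^2*α*x3*y1 + (-1:F)*ω^2*α*x2*y2 + (-1:F)*ω^2*α*x2*y1 + (-2:F)*ω^2*α*x1*y3 + (-1:F)*ω^2*α*x1*y2 + (-1:F)*ω^2*α*x*y3 + (-2:F)*ω^2*α*x*y2 + (-1:F)*ω^2*α*x*y1 + (-1:F)*ω^3*a3*x3*y1 + (-1:F)*ω^3*a3*x1*y + (-1:F)*ω^3*a3*x*y2 + (-1:F)*ω^3*a2*x3*y1 + (-1:F)*ω^3*a2*x1*y3 + (-1:F)*ω^3*a2*x*y + (-1:F)*ω^3*a1*x3*y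 + (-1:F)*ω^3*a1*x1*y3 + (-1:F)*ω^3*a1*x*y2 + (-1:F)*ω^3*α*x3*y3 + (-1:F)*ω^3*α*x3*y2 + (-1:F)*ω^3*α*x3*y1 + (-1:F)*ω^3*α*x1*y3 + (-1:F)*ω^3*α*x1*y2 + (-1:F)*ω^3*α*x1*y1 + (-1:F)*ω^3*α*x*y3 + (-1:F)*ω^3*α*x*y2 + (-1:F)*ω^3*α*x*y1 + (-1:F)*ω^4*α*x3*y1 + (-1:F)*ω^4*α*x1*y3 + (-1:F)*ω^4*α*x*y2) * h2 + (a3*x3*y1 + a3*x2*y + a3*x1*y2 + a3*x1*y1 + a3*x1*y + a3*x*y2 + a2*x3*y1 + a2*x2*y + a2*x1*y3 + a2*x*y3 + a2*x*y1 + a2*x*y + a1*x3*y3 + a1*x3*y2 + a1*x3*y + a1*x2*y + a1*x1*y3 + a1*x*y2 + α*x3*y1 + α*x2*y3 + α*x2*y2 + α*x2*y1 + α*x1*y3 + α*x*y2 + ω*a3*x3*y1 + ω*a3*x3*y + ω*a3*x1*y2 + ω*a3*x1*y1 + ω*a3*x1*y + ω*a3*x*y2 + ω*a3*x*y + ω*a2*x3*y1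 + ω*a2*x3*y + ω*a2*x1*y3 + ω*a2*x1*y + ω*a2*x*y3 + ω*a2*x*y1 + ω*a2*x*y + ω*a1*x3*y3 + ω*a1*x3*y2 + ω*a1*x3*y + ω*a1*x1*y3 + ω*a1*x1*y + ω*a1*x*y2 + ω*a1*x*y + ω*α*x3*y3 + ω*α*x3*y2 + ω*α*x3*y1 + ω*α*x1*y3 + ω*α*x1*y2 + ω*α*x1*y1 + ω*α*x*y3 + ω*α*x*y2 + ω*α*x*y1 + ω^2*a3*x1*y + ω^2*a2*x*y + ω^2*a1*x3*y + ω^2*α*x3*y1 + ω^2*α*x1*y3 + ω^2*α*x*y2) * hω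
end
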